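/- Let Y be a finite set of points in R^d in general position with |Y| ≥ d+1, let y_0,…,y_k ∈ Y with 0 ≤ k ≤ d−1, and let Δ be the k-simplex with vertices y_0,…,y_k. Let H be the linear span of {y_i − y_0 : 1 ≤ i ≤ k}, H* its orthogonal complement, ρ : R^d → H* the orthogonal projection, Y* = ρ(Y), and ŷ = ρ(y_0) = … = ρ(y_k). Then Δ is a face of the convex hull of Y if and only if ŷ is a vertex (extreme point) of the convex hull of Y* in H*. -/

import Mathlib

open Set

lemma face_subset_convexHull_inter {E : Type*} [AddCommGroup E] [Module ℝ E] {S F : Set E}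
    (h : IsExtreme ℝ (convexHull ℝ S) F) : F ⊆ convexHull ℝ (S ∩ F) := by
  intro x hx
  have hxS : x ∈ convexHull ℝ S := h.1 hx
  have hdiff : convexHull ℝ (S \ F) ⊆ convexHull ℝ S \ F :=
    convexHull_min (Set.diff_subset_diff_left (subset_convexHull ℝ S))
      (h.convex_diff (convex_convexHull ℝ S))
  by_cases hSF : S ∩ F = ∅
  · exfalso
    have hS : S \ F = S := by
      ext z; simp only [Set.mem_diff, and_iff_left_iff_imp]
      intro hz hzF
      exact absurd (Set.mem_inter hz hzF) (by simp [hSF])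
    rw [← hS] at hxS
    exact (hdiff hxS).2 hx
  · rcases Set.eq_empty_or_nonempty (S \ F) with hSd | hSd
    · have hS : S ∩ F = S := by
        ext z; simp only [Set.mem_inter_iff, and_iff_left_iff_imp]
        intro hz
        by_contra hzF
        exact absurd (Set.mem_diff_of_mem hz hzF) (by simp [hSd])
      rwa [hS]
    · have hunion : S = (S ∩ F) ∪ (S \ F) := (Set.inter_union_diff S F).symm
      rw [hunion, convexHull_union (Set.nonempty_iff_ne_empty.2 hSF) hSd,
        mem_convexJoin] at hxS
      obtain ⟨p, hp, q, hq, t₁, t₂, ht₁, ht₂, hts, hteq⟩ := hxS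
      have hpS : p ∈ convexHull ℝ S := convexHull_mono Set.inter_subset_left hp
      have hqS : q ∈ convexHull ℝ S := convexHull_mono Set.diff_subset hq
      rcases eq_or_lt_of_le ht₂ with h2 | h2
      · have hx_eq : x = p := by
          have h1 : t₁ = 1 := by linarith
          rw [← hteq, ← h2, h1, one_smul, zero_smul, add_zero]
        rwa [hx_eq]
      · rcases eq_or_lt_of_le ht₁ with h1 | h1
        · exfalso
          have hx_eq : x = q := by
            have h2' : t₂ = 1 := by linarith
            rw [← hteq, ← h1, h2', one_smul, zero_smul, zero_add]
          exact (hdiff hq).2 (hx_eq ▸ hx)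
        · exfalso
          have hxo : x ∈ openSegment ℝ p q := ⟨t₁, t₂, h1, h2, hts, hteq⟩
          exact (hdiff hq).2 (h.right_mem_of_mem_openSegment hpS hqS hx hxo)

set_option maxHeartbeats 2000000 in
theorem stmt_11 {d k : ℕ} (hk : k + 1 ≤ d) (Y : Finset (EuclideanSpace ℝ (Fin d)))
    (hcard : d + 1 ≤ Y.card)
    (hgp : ∀ s : Finset (EuclideanSpace ℝ (Fin d)), ↑s ⊆ (Y : Set (EuclideanSpace ℝ (Fin d))) →
      s.card ≤ d + 1 → AffineIndependent ℝ ((↑) : s → EuclideanSpace ℝ (Fin d)))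
    (y : Fin (k + 1) → EuclideanSpace ℝ (Fin d)) (hyinj : Function.Injective y)
    (hyY : ∀ i, y i ∈ Y) :
    IsExtreme ℝ (convexHull ℝ (Y : Set (EuclideanSpace ℝ (Fin d)))) (convexHull ℝ (Set.range y)) ↔
      Submodule.orthogonalProjectionOnto (Submodule.span ℝ (Set.range fun i => y i - y 0))ᗮ (y 0) ∈
        Set.extremePoints ℝ (convexHull ℝ
          ((fun z => Submodule.orthogonalProjectionOnto (Submodule.span ℝ (Set.range fun i => y i - y 0))ᗮ z) ''
            (Y : Set (EuclideanSpace ℝ (Fin d))))) := by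
  classical
  let V := EuclideanSpace ℝ (Fin d)
  set H : Submodule ℝ V := Submodule.span ℝ (Set.range fun i => y i - y 0) with hHdef
  set P : V →L[ℝ] Hᗮ := Submodule.orthogonalProjectionOnto Hᗮ with hPdef
  -- basic facts
  have hHmem : ∀ i, y i - y 0 ∈ H := fun i => Submodule.subset_span ⟨i, rfl⟩
  have hKK : Hᗮᗮ = H := Submodule.orthogonal_orthogonal H
  have hPsub : ∀ z w : V, P z = P w ↔ z - w ∈ H := by
    intro z w
    have h0 := Submodule.orthogonalProjectionOnto_eq_zero_iff (K := Hᗮ) (v := z - w)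
    rw [hKK] at h0
    rw [← sub_eq_zero, ← map_sub]
    exact h0
  have hPy : ∀ i, P (y i) = P (y 0) := fun i => (hPsub _ _).2 (hHmem i)
  -- image of convex hulls under P
  have himg : ∀ S : Set V, convexHull ℝ ((fun z => P z) '' S) =
      (fun z => P z) '' convexHull ℝ S := by
    intro S
    have := (P : V →ₗ[ℝ] Hᗮ).image_convexHull S
    simpa using this.symm
  have himgY := himg (Y : Set V)
  have hPΔ : ∀ z ∈ convexHull ℝ (Set.range y), P z = P (y 0) := by
    intro z hz
    have h1 : (fun z => P z) '' (Set.range y) = {P (y 0)} := by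
      apply Set.Subset.antisymm
      · rintro _ ⟨_, ⟨i, rfl⟩, rfl⟩; exact hPy i
      · rintro _ rfl; exact ⟨y 0, ⟨0, rfl⟩, rfl⟩
    have h2 : P z ∈ (fun z => P z) '' convexHull ℝ (Set.range y) := ⟨z, hz, rfl⟩
    rw [← himg, h1, convexHull_singleton] at h2
    exact h2
  -- general position: fiber over ŷ meets Y only in range y
  have hHle : Module.finrank ℝ H ≤ k := by
    have h1 : H = Submodule.span ℝ (Set.range fun i : Fin k => y i.succ - y 0) := by
      apply le_antisymm
      · rw [hHdef, Submodule.span_le]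
        rintro _ ⟨i, rfl⟩
        induction i using Fin.cases with
        | zero => simp
        | succ j => exact Submodule.subset_span ⟨j, rfl⟩
      · rw [hHdef, Submodule.span_le]
        rintro _ ⟨i, rfl⟩
        exact Submodule.subset_span ⟨i.succ, rfl⟩
    rw [h1]
    have h2 := finrank_range_le_card (R := ℝ) (fun i : Fin k => y i.succ - y 0)
    simpa [Set.finrank] using h2
  have claimA : ∀ z ∈ Y, P z = P (y 0) → z ∈ Set.range y := by
    intro z hz hPz
    by_contra hznot
    have hzH : z - y 0 ∈ H := (hPsub z (y 0)).1 hPz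
    set s : Finset V := insert z (Finset.image y Finset.univ) with hs
    have hzimg : z ∉ Finset.image y Finset.univ := by
      simp only [Finset.mem_image]
      rintro ⟨i, -, rfl⟩
      exact hznot ⟨i, rfl⟩
    have hscard : s.card = k + 2 := by
      rw [hs, Finset.card_insert_of_notMem hzimg,
        Finset.card_image_of_injective _ hyinj, Finset.card_univ, Fintype.card_fin]
    have hsub : ↑s ⊆ (Y : Set V) := by
      intro w hw
      simp only [hs, Finset.coe_insert, Set.mem_insert_iff, Finset.coe_image,
        Set.mem_image, Finset.mem_coe] at hw
      rcases hw with rfl | ⟨i, -, rfl⟩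
      · exact hz
      · exact hyY i
    have hai := hgp s hsub (by omega)
    have hfin : Module.finrank ℝ (vectorSpan ℝ (Set.range ((↑) : s → V))) = k + 1 :=
      hai.finrank_vectorSpan (by rw [Fintype.card_coe, hscard])
    have hmemH : ∀ w ∈ s, w - y 0 ∈ H := by
      intro w hw
      simp only [hs, Finset.mem_insert, Finset.mem_image] at hw
      rcases hw with rfl | ⟨i, -, rfl⟩
      · exact hzH
      · exact hHmem i
    have hvs : vectorSpan ℝ (Set.range ((↑) : s → V)) ≤ H := by
      rw [Subtype.range_coe_subtype]
      have : {x | x ∈ s} = (s : Set V) := rfl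
      rw [this, vectorSpan_def, Submodule.span_le]
      rintro _ ⟨a, ha, b, hb, rfl⟩
      show a - b ∈ H
      have hab : a - b = (a - y 0) - (b - y 0) := by abel
      rw [hab]
      exact Submodule.sub_mem H (hmemH a ha) (hmemH b hb)
    have hmono := Submodule.finrank_mono hvs
    omega
  -- membership of convex combinations in Δ
  have hmemΔ : ∀ α : Fin (k+1) → ℝ, (∀ i, 0 ≤ α i) → (∑ i, α i) = 1 →
      (∑ i, α i • y i) ∈ convexHull ℝ (Set.range y) := by
    intro α h0 h1
    have := Finset.centerMass_mem_convexHull (Finset.univ) (fun i _ => h0 i)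
      (by rw [h1]; norm_num) (fun i _ => Set.mem_range_self (f := y) i)
    rwa [Finset.centerMass_eq_of_sum_1 _ _ h1] at this
  have hΔY : convexHull ℝ (Set.range y) ⊆ convexHull ℝ (Y : Set V) :=
    convexHull_mono (by rintro _ ⟨i, rfl⟩; exact hyY i)
  constructor
  · intro hE
    refine ⟨subset_convexHull ℝ _ ⟨y 0, hyY 0, rfl⟩, ?_⟩
    intro u hu v hv hseg
    rw [himgY] at hu hv
    obtain ⟨a, ha, rfl⟩ := hu
    obtain ⟨b, hb, rfl⟩ := hv
    obtain ⟨t₁, t₂, ht₁, ht₂, hts, hteq⟩ := hseg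
    set x : V := t₁ • a + t₂ • b with hxdef
    have hxY : x ∈ convexHull ℝ (Y : Set V) :=
      (convex_convexHull ℝ _) ha hb ht₁.le ht₂.le hts
    have hPx : P x = P (y 0) := by
      rw [hxdef, map_add, map_smul, map_smul]
      exact hteq
    set c : V := ∑ i, ((k : ℝ) + 1)⁻¹ • y i with hcdef
    have hkpos : (0:ℝ) < (k : ℝ) + 1 := by positivity
    have hsuminv : ∑ _i : Fin (k+1), ((k : ℝ) + 1)⁻¹ = 1 := by
      rw [Finset.sum_const, Finset.card_univ, Fintype.card_fin]
      rw [nsmul_eq_mul]; push_cast; field_simp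
    have hcΔ : c ∈ convexHull ℝ (Set.range y) :=
      hmemΔ _ (fun i => by positivity) hsuminv
    have hcx : c - x ∈ H := by
      have h1 : c - y 0 ∈ H := by
        have he : c - y 0 = ∑ i, ((k : ℝ) + 1)⁻¹ • (y i - y 0) := by
          simp only [hcdef, smul_sub, Finset.sum_sub_distrib, ← Finset.sum_smul, hsuminv, one_smul]
        rw [he]
        exact Submodule.sum_mem H fun i _ => Submodule.smul_mem H _ (hHmem i)
      have h2 : x - y 0 ∈ H := (hPsub x (y 0)).1 hPx
      have he : c - x = (c - y 0) - (x - y 0) := by abel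
      rw [he]
      exact Submodule.sub_mem H h1 h2
    rw [hHdef] at hcx
    obtain ⟨μ, hμ⟩ := (Submodule.mem_span_range_iff_exists_fun ℝ).1 hcx
    set C : ℝ := ∑ i, |μ i| with hCdef
    have hC0 : 0 ≤ C := Finset.sum_nonneg fun i _ => abs_nonneg _
    obtain ⟨ε, hε, hεle⟩ : ∃ ε : ℝ, 0 < ε ∧ 2*(ε*C) + ε ≤ ((k : ℝ) + 1)⁻¹ := by
      refine ⟨((k : ℝ) + 1)⁻¹ / (2*C+1), by positivity, ?_⟩
      have hr : 2*((((k : ℝ) + 1)⁻¹ / (2*C+1))*C) + (((k : ℝ) + 1)⁻¹ / (2*C+1)) =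
          (((k : ℝ) + 1)⁻¹ / (2*C+1)) * (2*C+1) := by ring
      rw [hr, div_mul_cancel₀ _ (by positivity : (2*C+1 : ℝ) ≠ 0)]
    have hμle : ∀ i, |μ i| ≤ C :=
      fun i => Finset.single_le_sum (fun j _ => abs_nonneg (μ j)) (Finset.mem_univ i)
    have hsum_le : |∑ j, μ j| ≤ C := Finset.abs_sum_le_sum_abs _ _
    set α : Fin (k+1) → ℝ :=
      fun i => ((k : ℝ) + 1)⁻¹ + ε * μ i - (if i = 0 then ε * ∑ j, μ j else 0) with hαdef
    have hα0 : ∀ i, 0 ≤ α i := by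
      intro i
      have e1 : ε * (-C) ≤ ε * μ i :=
        mul_le_mul_of_nonneg_left (neg_le_of_abs_le (hμle i)) hε.le
      have e1' : -(ε * C) ≤ ε * μ i := by rw [mul_neg] at e1; exact e1
      have e2 : ε * ∑ j, μ j ≤ ε * C :=
        mul_le_mul_of_nonneg_left (le_trans (le_abs_self _) hsum_le) hε.le
      simp only [hαdef]
      split
      · linarith [mul_nonneg hε.le hC0]
      · linarith [mul_nonneg hε.le hC0]
    have hαsum : ∑ i, α i = 1 := by
      simp only [hαdef]
      rw [Finset.sum_sub_distrib, Finset.sum_add_distrib, hsuminv, ← Finset.mul_sum,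
        Finset.sum_ite_eq' Finset.univ (0 : Fin (k+1)) (fun _ => ε * ∑ j, μ j)]
      simp
    set w : V := ∑ i, α i • y i with hwdef
    have hwΔ : w ∈ convexHull ℝ (Set.range y) := hmemΔ α hα0 hαsum
    have key : ∀ i, α i • y i = ((k : ℝ) + 1)⁻¹ • y i + ε • (μ i • (y i - y 0)) +
        ((ε * μ i) • y 0 - (if i = 0 then (ε * ∑ j, μ j) • y 0 else 0)) := by
      intro i
      by_cases h : i = 0
      · subst h
        simp only [hαdef, if_pos]
        module
      · simp only [hαdef, if_neg h]
        module
    have hwc : w = c + ε • (c - x) := by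
      calc w = ∑ i, (((k : ℝ) + 1)⁻¹ • y i + ε • (μ i • (y i - y 0)) +
            ((ε * μ i) • y 0 - (if i = 0 then (ε * ∑ j, μ j) • y 0 else 0))) :=
          Finset.sum_congr rfl fun i _ => key i
        _ = c + ε • (∑ i, μ i • (y i - y 0)) +
            ((∑ i, (ε * μ i) • y 0) - (ε * ∑ j, μ j) • y 0) := by
          rw [Finset.sum_add_distrib, Finset.sum_add_distrib, Finset.sum_sub_distrib,
            Finset.smul_sum, Finset.sum_ite_eq' Finset.univ (0 : Fin (k+1))
              (fun _ => (ε * ∑ j, μ j) • y 0)]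
          simp [hcdef]
        _ = c + ε • (c - x) := by
          rw [hμ, ← Finset.sum_smul, ← Finset.mul_sum]
          simp
    have hcseg : c ∈ openSegment ℝ x w := by
      have h1ε : (0:ℝ) < 1 + ε := by positivity
      have hne : (1+ε : ℝ) ≠ 0 := h1ε.ne'
      clear_value w c x
      refine ⟨ε/(1+ε), 1/(1+ε), by positivity, by positivity,
        by rw [← add_div, add_comm, div_self hne], ?_⟩
      rw [hwc]
      match_scalars <;> (field_simp; try ring)
    have hxΔ : x ∈ convexHull ℝ (Set.range y) :=
      hE.2 hxY (hΔY hwΔ) hcΔ hcseg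
    have haΔ := hE.2 ha hb hxΔ ⟨t₁, t₂, ht₁, ht₂, hts, hxdef.symm⟩
    exact hPΔ a haΔ
  · intro hP
    set F : Set V := convexHull ℝ (Y : Set V) ∩ (fun z => P z) ⁻¹' {P (y 0)} with hFdef
    have hF : IsExtreme ℝ (convexHull ℝ (Y : Set V)) F := by
      constructor
      · exact Set.inter_subset_left
      · intro x1 h1 x2 h2 x hxF hseg
        obtain ⟨t₁, t₂, ht₁, ht₂, hts, hteq⟩ := hseg
        have h1' : P x1 ∈ convexHull ℝ ((fun z => P z) '' (Y : Set V)) := by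
          rw [himgY]; exact ⟨x1, h1, rfl⟩
        have h2' : P x2 ∈ convexHull ℝ ((fun z => P z) '' (Y : Set V)) := by
          rw [himgY]; exact ⟨x2, h2, rfl⟩
        have hseg' : P (y 0) ∈ openSegment ℝ (P x1) (P x2) := by
          refine ⟨t₁, t₂, ht₁, ht₂, hts, ?_⟩
          have hx0 : P x = P (y 0) := hxF.2
          rw [← hx0, ← hteq]
          simp [map_add, map_smul]
        have hres := hP.2 h1' h2' hseg'
        exact ⟨h1, hres⟩
    have hFsub : F ⊆ convexHull ℝ (Set.range y) := by
      refine (face_subset_convexHull_inter hF).trans (convexHull_mono ?_)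
      rintro z ⟨hzY, -, hz2⟩
      exact claimA z hzY hz2
    have hΔF : convexHull ℝ (Set.range y) ⊆ F := fun z hz => ⟨hΔY hz, hPΔ z hz⟩
    have hFeq : F = convexHull ℝ (Set.range y) := Set.Subset.antisymm hFsub hΔF
    rw [← hFeq]
    exact hF
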